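/- arXiv:2202.07069 — 2 statements merged into one kernel-verified Lean document; each statement's English description precedes it below -/
import Mathlib

section
/- Let V be a commutative unital quantale, F : Type u ⥤ Type u a functor, λ a monotone κ-ary predicate lifting for F, and (X,a) a V-category. For p : X → κ → V define (a⋆p) x i = ⨆_z (p z i ⊗ a z x). Then for all 𝔵,𝔶 ∈ F.obj X: ⨅_{f : (X,a) → V^κ V-functor} hom (λ_X f 𝔵) (λ_X f 𝔶) = ⨅_{p : X → κ → V} hom (λ_X p 𝔵) (λ_X (a⋆p) 𝔶). (The Kantorovich lifting with respect to a monotone predicate lifting coincides with the lifting induced by the corresponding Kantorovich lax extension.) -/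
universe u v w

open CategoryTheory

/-- `V` is a (commutative unital) quantale: the tensor distributes over suprema. -/
def QuantaleLaw (V : Type u) [CompleteLattice V] [CommMonoid V] : Prop :=
  ∀ (u : V) (s : Set V), u * sSup s = ⨆ v ∈ s, u * v

/-- Internal hom of the quantale: `hom u w = ⨆ {v | u ⊗ v ≤ w}`. -/
def qhom {V : Type u} [CompleteLattice V] [CommMonoid V] (u w : V) : V :=
  sSup {v | u * v ≤ w}

/-- `a` is a `V`-category structure on `X`. -/
def IsVCat {V : Type u} [CompleteLattice V] [CommMonoid V] {X : Type v}
    (a : X → X → V) : Prop :=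
  (∀ x, (1 : V) ≤ a x x) ∧ ∀ x y z, a x y * a y z ≤ a x z

/-- `f` is a `V`-functor from `(X,a)` to `(Y,b)`. -/
def IsVFunctor {V : Type u} [CompleteLattice V] {X : Type v} {Y : Type w}
    (a : X → X → V) (b : Y → Y → V) (f : X → Y) : Prop :=
  ∀ x y, a x y ≤ b (f x) (f y)

/-- `f` is an initial `V`-functor from `(X,a)` to `(Y,b)`. -/
def IsInitialVFunctor {V : Type u} {X : Type v} {Y : Type w}
    (a : X → X → V) (b : Y → Y → V) (f : X → Y) : Prop :=
  ∀ x y, a x y = b (f x) (f y)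

/-- The `V`-category structure of the power `V^κ`. -/
def powStr {V : Type u} [CompleteLattice V] [CommMonoid V] (κ : Type v)
    (p q : κ → V) : V :=
  ⨅ i, qhom (p i) (q i)

/-- The graph of a function, as a `V`-relation: `k` on the graph, `⊥` elsewhere. -/
def fnGraph {V : Type u} [CompleteLattice V] [CommMonoid V] {X : Type v} {Y : Type w}
    (f : X → Y) : X → Y → V :=
  fun x y => ⨆ _ : f x = y, (1 : V)

/-- A lifting of a `Set`-functor `F` to `V`-Cat. -/
structure Lifting (V : Type u) [CompleteLattice V] [CommMonoid V]
    (F : Type u ⥤ Type u) where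
  str : ∀ {X : Type u}, (X → X → V) → F.obj X → F.obj X → V
  isVCat : ∀ {X : Type u} (a : X → X → V), IsVCat a → IsVCat (str a)
  map : ∀ {X Y : Type u} (a : X → X → V) (b : Y → Y → V) (f : X → Y),
    IsVCat a → IsVCat b → IsVFunctor a b f →
    IsVFunctor (str a) (str b) (F.map (TypeCat.ofHom f))

/-- A `κ`-ary `V`-valued predicate lifting for a `Set`-functor `F`. -/
structure PredLifting (V : Type u) [CompleteLattice V] [CommMonoid V]
    (F : Type u ⥤ Type u) (κ : Type u) where
  app : ∀ {X : Type u}, (X → κ → V) → F.obj X → V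
  natural : ∀ {X Y : Type u} (f : X → Y) (p : Y → κ → V) (t : F.obj X),
    app (fun x => p (f x)) t = app p (F.map (TypeCat.ofHom f) t)

/-- A predicate lifting is monotone if it preserves the pointwise order of predicates. -/
def PredLifting.Mono {V : Type u} [CompleteLattice V] [CommMonoid V]
    {F : Type u ⥤ Type u} {κ : Type u} (lam : PredLifting V F κ) : Prop :=
  ∀ (X : Type u) (p q : X → κ → V), (∀ x i, p x i ≤ q x i) →
    ∀ t, lam.app p t ≤ lam.app q t

/-- A predicate lifting is compatible with a lifting `L` if it lifts `V`-functorial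
predicates to `V`-functorial predicates. -/
def Compatible {V : Type u} [CompleteLattice V] [CommMonoid V] {F : Type u ⥤ Type u}
    (L : Lifting V F) {κ : Type u} (lam : PredLifting V F κ) : Prop :=
  ∀ (X : Type u) (a : X → X → V), IsVCat a → ∀ f : X → κ → V,
    IsVFunctor a (powStr κ) f → IsVFunctor (L.str a) qhom (lam.app f)

/-- The Kantorovich `V`-category structure on `F.obj X` induced by a family of
predicate liftings. -/
noncomputable def kantStr {V : Type u} [CompleteLattice V] [CommMonoid V]
    {F : Type u ⥤ Type u} {ι : Type v} {κ : ι → Type u}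
    (Λ : ∀ l, PredLifting V F (κ l)) {X : Type u} (a : X → X → V)
    (t s : F.obj X) : V :=
  ⨅ l, ⨅ f : {f : X → κ l → V // IsVFunctor a (powStr (κ l)) f},
    qhom ((Λ l).app f.1 t) ((Λ l).app f.1 s)

/-- A generalized predicate lifting for `(F, L)` with parameter `V`-category `(A, α)`. -/
structure GenPredLifting (V : Type u) [CompleteLattice V] [CommMonoid V]
    (F : Type u ⥤ Type u) (L : Lifting V F) (A : Type u) (α : A → A → V) where
  app : ∀ {Z : Type u}, (Z → Z → V) → (Z → A) → F.obj Z → V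
  isVFunctor : ∀ {Z : Type u} (c : Z → Z → V), IsVCat c → ∀ f : Z → A,
    IsVFunctor c α f → IsVFunctor (L.str c) qhom (app c f)
  natural : ∀ {Z Z' : Type u} (c : Z → Z → V) (c' : Z' → Z' → V),
    IsVCat c → IsVCat c' → ∀ (u : Z → Z'), IsVFunctor c c' u →
    ∀ (g : Z' → A), IsVFunctor c' α g →
    ∀ t : F.obj Z, app c (fun z => g (u z)) t = app c' g (F.map (TypeCat.ofHom u) t)

/-- A lax extension of a `Set`-functor `F` to `V`-Rel. -/
structure LaxExt (V : Type u) [CompleteLattice V] [CommMonoid V]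
    (F : Type u ⥤ Type u) where
  ext : ∀ {X Y : Type u}, (X → Y → V) → F.obj X → F.obj Y → V
  mono : ∀ {X Y : Type u} (r r' : X → Y → V), (∀ x y, r x y ≤ r' x y) →
    ∀ t s, ext r t s ≤ ext r' t s
  comp : ∀ {X Y Z : Type u} (r : X → Y → V) (s : Y → Z → V)
    (t : F.obj X) (w : F.obj Z),
    (⨆ u : F.obj Y, ext r t u * ext s u w) ≤
      ext (fun x z => ⨆ y, r x y * s y z) t w
  lax_map : ∀ {X Y : Type u} (f : X → Y) (t : F.obj X),
    (1 : V) ≤ ext (fnGraph f) t (F.map (TypeCat.ofHom f) t)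
  lax_map_op : ∀ {X Y : Type u} (f : X → Y) (t : F.obj X),
    (1 : V) ≤ ext (fun y x => fnGraph f x y) (F.map (TypeCat.ofHom f) t) t


section Aux
variable {V : Type u} [CompleteLattice V] [CommMonoid V]

lemma qmul_mono_right (hV : QuantaleLaw V) {u v : V} (w : V) (h : u ≤ v) :
    w * u ≤ w * v := by
  have h2 := hV w {u, v}
  rw [sSup_pair, sup_eq_right.mpr h] at h2
  rw [h2]
  exact le_iSup₂ (f := fun v' (_ : v' ∈ ({u, v} : Set V)) => w * v') u (by simp)

lemma qle_qhom {u v w : V} (h : u * v ≤ w) : v ≤ qhom u w := le_sSup h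

lemma qmul_qhom_le (hV : QuantaleLaw V) (u w : V) : u * qhom u w ≤ w := by
  rw [qhom, hV u]
  exact iSup₂_le fun v hv => hv

lemma qhom_mono₂ {u w w' : V} (h : w ≤ w') : qhom u w ≤ qhom u w' :=
  sSup_le_sSup fun v hv => le_trans hv h

lemma qhom_anti₁ (hV : QuantaleLaw V) {u u' w : V} (h : u' ≤ u) :
    qhom u w ≤ qhom u' w := by
  refine sSup_le fun v hv => le_sSup ?_
  calc u' * v = v * u' := mul_comm _ _
    _ ≤ v * u := qmul_mono_right hV v h
    _ = u * v := mul_comm _ _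
    _ ≤ w := hv

lemma qiSup_mul (hV : QuantaleLaw V) {ι : Sort*} (g : ι → V) (u : V) :
    (⨆ i, g i) * u = ⨆ i, g i * u := by
  calc (⨆ i, g i) * u = u * sSup (Set.range g) := by rw [mul_comm, sSup_range]
    _ = ⨆ v ∈ Set.range g, u * v := hV u _
    _ = ⨆ i, u * g i := by rw [iSup_range]
    _ = ⨆ i, g i * u := by simp only [mul_comm]

lemma star_functor (hV : QuantaleLaw V) {X : Type v} {κ : Type w} {a : X → X → V}
    (ha : IsVCat a) (p : X → κ → V) :
    IsVFunctor a (powStr κ) (fun x i => ⨆ z, p z i * a z x) := by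
  intro x y
  refine le_iInf fun i => qle_qhom ?_
  rw [qiSup_mul hV]
  refine iSup_le fun z => ?_
  calc p z i * a z x * a x y = p z i * (a z x * a x y) := mul_assoc _ _ _
    _ ≤ p z i * a z y := qmul_mono_right hV _ (ha.2 z x y)
    _ ≤ ⨆ z', p z' i * a z' y := le_iSup (fun z' => p z' i * a z' y) z

lemma p_le_star (hV : QuantaleLaw V) {X : Type v} {κ : Type w} {a : X → X → V}
    (ha : IsVCat a) (p : X → κ → V) (x : X) (i : κ) :
    p x i ≤ ⨆ z, p z i * a z x := by
  calc p x i = p x i * 1 := (mul_one _).symm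
    _ ≤ p x i * a x x := qmul_mono_right hV _ (ha.1 x)
    _ ≤ ⨆ z, p z i * a z x := le_iSup (fun z => p z i * a z x) x

lemma star_le_of_functor (hV : QuantaleLaw V) {X : Type v} {κ : Type w}
    {a : X → X → V} {f : X → κ → V} (hf : IsVFunctor a (powStr κ) f)
    (x : X) (i : κ) : (⨆ z, f z i * a z x) ≤ f x i := by
  refine iSup_le fun z => ?_
  calc f z i * a z x ≤ f z i * qhom (f z i) (f x i) :=
        qmul_mono_right hV _ (le_trans (hf z x) (iInf_le _ i))
    _ ≤ f x i := qmul_qhom_le hV _ _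

end Aux

/-- the Kantorovich lifting w.r.t. a monotone predicate lifting coincides
with the lifting induced by the corresponding Kantorovich lax extension. -/
theorem stmt_5 {V : Type u} [CompleteLattice V] [CommMonoid V] (hV : QuantaleLaw V)
    {F : Type u ⥤ Type u} {κ : Type u} (lam : PredLifting V F κ) (hmono : lam.Mono)
    {X : Type u} (a : X → X → V) (ha : IsVCat a) (t s : F.obj X) :
    (⨅ f : {f : X → κ → V // IsVFunctor a (powStr κ) f},
        qhom (lam.app f.1 t) (lam.app f.1 s)) =
    ⨅ p : X → κ → V,
        qhom (lam.app p t) (lam.app (fun x i => ⨆ z, p z i * a z x) s) := by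
  apply le_antisymm
  · refine le_iInf fun p => ?_
    have hfun := star_functor hV ha p
    calc (⨅ f : {f : X → κ → V // IsVFunctor a (powStr κ) f},
            qhom (lam.app f.1 t) (lam.app f.1 s))
        ≤ qhom (lam.app (fun x i => ⨆ z, p z i * a z x) t)
            (lam.app (fun x i => ⨆ z, p z i * a z x) s) :=
          iInf_le _ (⟨fun x i => ⨆ z, p z i * a z x, hfun⟩ : {f : X → κ → V // IsVFunctor a (powStr κ) f})
      _ ≤ qhom (lam.app p t) (lam.app (fun x i => ⨆ z, p z i * a z x) s) :=
          qhom_anti₁ hV (hmono X _ _ (p_le_star hV ha p) t)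
  · refine le_iInf fun f => ?_
    calc (⨅ p : X → κ → V,
            qhom (lam.app p t) (lam.app (fun x i => ⨆ z, p z i * a z x) s))
        ≤ qhom (lam.app f.1 t) (lam.app (fun x i => ⨆ z, f.1 z i * a z x) s) :=
          iInf_le _ f.1
      _ ≤ qhom (lam.app f.1 t) (lam.app f.1 s) :=
          qhom_mono₂ (hmono X _ _ (star_le_of_functor hV f.2) s)
end

section
/- Let V be a commutative unital quantale, F : Type u ⥤ Type u a functor, L a lifting of F to V-Cat, and λ a κ-ary predicate lifting for F. Then λ is compatible with L if and only if λ_{κ→V} applied to the identity predicate id : (κ → V) → (κ → V) is a V-functor from (F.obj (κ → V), L [−,−]) to (V,hom), where [−,−] is the structure of V^κ; that is, iff for all 𝔵,𝔶 ∈ F.obj (κ → V), L [−,−] 𝔵 𝔶 ≤ hom (λ_{κ→V} id 𝔵) (λ_{κ→V} id 𝔶). -/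
universe u v w

open CategoryTheory

section Aux

variable {V : Type u} [CompleteLattice V] [CommMonoid V]

theorem mul_mono_right (hV : QuantaleLaw V) (u : V) {v w : V} (h : v ≤ w) :
    u * v ≤ u * w := by
  have : u * w = u * sSup {v, w} := by rw [sSup_pair, sup_eq_right.mpr h]
  rw [this, hV u {v, w}]
  exact le_biSup _ (Set.mem_insert v {w})

theorem mul_mono (hV : QuantaleLaw V) {u u' v w : V} (h : u ≤ u') (h' : v ≤ w) :
    u * v ≤ u' * w :=
  calc u * v ≤ u * w := mul_mono_right hV u h'
    _ = w * u := mul_comm _ _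
    _ ≤ w * u' := mul_mono_right hV w h
    _ = u' * w := mul_comm _ _

theorem qhom_adj (hV : QuantaleLaw V) {u v w : V} : u * v ≤ w ↔ v ≤ qhom u w := by
  constructor
  · intro h; exact le_sSup h
  · intro h
    calc u * v ≤ u * qhom u w := mul_mono_right hV u h
    _ = ⨆ x ∈ {x | u * x ≤ w}, u * x := hV u _
    _ ≤ w := by exact iSup₂_le fun x hx => hx

theorem powStr_isVCat (hV : QuantaleLaw V) (κ : Type v) :
    IsVCat (powStr (V := V) κ) := by
  constructor
  · intro p
    refine le_iInf fun i => (qhom_adj hV).mp ?_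
    simp
  · intro p q r
    refine le_iInf fun i => (qhom_adj hV).mp ?_
    calc p i * (powStr κ p q * powStr κ q r)
        ≤ p i * (qhom (p i) (q i) * qhom (q i) (r i)) :=
          mul_mono_right hV _ (mul_mono hV (iInf_le _ i) (iInf_le _ i))
      _ = (p i * qhom (p i) (q i)) * qhom (q i) (r i) := (mul_assoc _ _ _).symm
      _ ≤ q i * qhom (q i) (r i) :=
          mul_mono hV ((qhom_adj hV).mpr le_rfl) le_rfl
      _ ≤ r i := (qhom_adj hV).mpr le_rfl

end Aux

/-- a predicate lifting is compatible with a lifting `L` iff its value on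
the identity predicate is a `V`-functor `(F.obj (κ → V), L [−,−]) → (V, hom)`. -/
theorem stmt_8 {V : Type u} [CompleteLattice V] [CommMonoid V] (hV : QuantaleLaw V)
    {F : Type u ⥤ Type u} (L : Lifting V F) {κ : Type u}
    (lam : PredLifting V F κ) :
    Compatible L lam ↔
      ∀ t s : F.obj (κ → V),
        L.str (powStr κ) t s ≤
          qhom (lam.app (fun p => p) t) (lam.app (fun p => p) s) := by
  constructor
  · intro hC t s
    exact hC (κ → V) (powStr κ) (powStr_isVCat hV κ) (fun p => p)
      (fun p q => le_rfl) t s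
  · intro h X a ha f hf t s
    have hmap := L.map a (powStr κ) f ha (powStr_isVCat hV κ) hf t s
    have hnat : ∀ u : F.obj X, lam.app f u = lam.app (fun p => p) (F.map (TypeCat.ofHom f) u) :=
      fun u => lam.natural f (fun p => p) u
    rw [hnat t, hnat s]
    exact le_trans hmap (h (F.map (TypeCat.ofHom f) t) (F.map (TypeCat.ofHom f) s))
end
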